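/- Let f : Θ → ℝ be a function on a finite set Θ, and let ν be a probability measure on Θ whose support intersects f⁻¹(y) for at least three distinct values y in f(Θ). Then there exist probability measures ν₁ ≠ ν₂ on Θ and λ ∈ (0,1) such that ν = λν₁ + (1−λ)ν₂ and E_{ν₁}[f] = E_{ν₂}[f] = E_ν[f]. -/
import Mathlib


open Finset

/-- A posterior whose support meets at least three distinct f-level sets splits into two
distinct posteriors with the same posterior mean of f. -/
theorem stmt_12 {Θ : Type*} [Fintype Θ] (f : Θ → ℝ) (ν : Θ → ℝ)
    (hνnn : ∀ θ, 0 ≤ ν θ) (hνone : ∑ θ, ν θ = 1)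
    (y₁ y₂ y₃ : ℝ) (h12 : y₁ ≠ y₂) (h13 : y₁ ≠ y₃) (h23 : y₂ ≠ y₃)
    (h1 : ∃ θ, f θ = y₁ ∧ 0 < ν θ)
    (h2 : ∃ θ, f θ = y₂ ∧ 0 < ν θ)
    (h3 : ∃ θ, f θ = y₃ ∧ 0 < ν θ) :
    ∃ (ν₁ ν₂ : Θ → ℝ) (lam : ℝ),
      ν₁ ≠ ν₂ ∧ 0 < lam ∧ lam < 1 ∧
      (∀ θ, 0 ≤ ν₁ θ) ∧ ∑ θ, ν₁ θ = 1 ∧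
      (∀ θ, 0 ≤ ν₂ θ) ∧ ∑ θ, ν₂ θ = 1 ∧
      (∀ θ, ν θ = lam * ν₁ θ + (1 - lam) * ν₂ θ) ∧
      ∑ θ, f θ * ν₁ θ = ∑ θ, f θ * ν θ ∧
      ∑ θ, f θ * ν₂ θ = ∑ θ, f θ * ν θ := by
  classical
  obtain ⟨θ₁, hf1, hν1⟩ := h1
  obtain ⟨θ₂, hf2, hν2⟩ := h2
  obtain ⟨θ₃, hf3, hν3⟩ := h3
  have hne12 : θ₁ ≠ θ₂ := fun h => h12 (by rw [← hf1, ← hf2, h])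
  have hne13 : θ₁ ≠ θ₃ := fun h => h13 (by rw [← hf1, ← hf3, h])
  have hne23 : θ₂ ≠ θ₃ := fun h => h23 (by rw [← hf2, ← hf3, h])
  set a : ℝ := y₂ - y₃ with ha_def
  set b : ℝ := y₃ - y₁ with hb_def
  set c : ℝ := y₁ - y₂ with hc_def
  have ha : a ≠ 0 := sub_ne_zero.mpr h23
  set g : Θ → ℝ := fun θ =>
    (if θ = θ₁ then a else 0) + (if θ = θ₂ then b else 0) + (if θ = θ₃ then c else 0) with hg
  have hsumg : ∑ θ, g θ = 0 := by
    simp only [hg, Finset.sum_add_distrib, Finset.sum_ite_eq', Finset.mem_univ, if_true]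
    ring
  have hsumfg : ∑ θ, f θ * g θ = 0 := by
    simp only [hg, mul_add, mul_ite, mul_zero, Finset.sum_add_distrib,
      Finset.sum_ite_eq', Finset.mem_univ, if_true, hf1, hf2, hf3]
    ring
  set M : ℝ := max |a| (max |b| |c|) with hM_def
  have hM : 0 < M := lt_of_lt_of_le (abs_pos.mpr ha) (le_max_left _ _)
  set m : ℝ := min (ν θ₁) (min (ν θ₂) (ν θ₃)) with hm_def
  have hm : 0 < m := lt_min hν1 (lt_min hν2 hν3)
  set ε : ℝ := m / M with hε_def
  have hε : 0 < ε := div_pos hm hM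
  have hεM : ε * M = m := div_mul_cancel₀ m hM.ne'
  have key : ∀ (x : ℝ) (θ : Θ), |x| ≤ M → m ≤ ν θ → ε * |x| ≤ ν θ := by
    intro x θ hx hθ
    calc ε * |x| ≤ ε * M := by nlinarith
    _ = m := hεM
    _ ≤ ν θ := hθ
  have hbound : ∀ θ, ε * |g θ| ≤ ν θ := by
    intro θ
    by_cases e1 : θ = θ₁
    · have hgθ : g θ = a := by simp [hg, e1, hne12, hne13]
      rw [hgθ, e1]
      exact key a θ₁ (le_max_left _ _) (min_le_left _ _)
    · by_cases e2 : θ = θ₂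
      · have hgθ : g θ = b := by simp [hg, e2, hne12.symm, hne23]
        rw [hgθ, e2]
        exact key b θ₂ (le_trans (le_max_left _ _) (le_max_right _ _))
          (le_trans (min_le_right _ _) (min_le_left _ _))
      · by_cases e3 : θ = θ₃
        · have hgθ : g θ = c := by simp [hg, e3, hne13.symm, hne23.symm]
          rw [hgθ, e3]
          exact key c θ₃ (le_trans (le_max_right _ _) (le_max_right _ _))
            (le_trans (min_le_right _ _) (min_le_right _ _))
        · have : g θ = 0 := by simp [hg, e1, e2, e3]
          rw [this]
          simpa using hνnn θ
  refine ⟨fun θ => ν θ + ε * g θ, fun θ => ν θ - ε * g θ, 1/2, ?_, by norm_num, by norm_num,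
    ?_, ?_, ?_, ?_, ?_, ?_, ?_⟩
  · intro h
    have := congrFun h θ₁
    have hg1 : g θ₁ = a := by simp [hg, hne12, hne13]
    rw [hg1] at this
    have : ε * a = 0 := by linarith
    rcases mul_eq_zero.mp this with h' | h'
    · exact hε.ne' h'
    · exact ha h'
  · intro θ
    dsimp only
    have h1 : ε * (-|g θ|) ≤ ε * g θ := mul_le_mul_of_nonneg_left (neg_abs_le _) hε.le
    linarith [hbound θ]
  · rw [Finset.sum_add_distrib, hνone, ← Finset.mul_sum, hsumg]; ring
  · intro θ
    dsimp only
    have h1 : ε * g θ ≤ ε * |g θ| := mul_le_mul_of_nonneg_left (le_abs_self _) hε.le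
    linarith [hbound θ]
  · rw [Finset.sum_sub_distrib, hνone, ← Finset.mul_sum, hsumg]; ring
  · intro θ; ring
  · have : ∑ θ, f θ * (ν θ + ε * g θ) = ∑ θ, f θ * ν θ + ε * ∑ θ, f θ * g θ := by
      rw [Finset.mul_sum, ← Finset.sum_add_distrib]; congr 1; ext θ; ring
    rw [this, hsumfg]; ring
  · have : ∑ θ, f θ * (ν θ - ε * g θ) = ∑ θ, f θ * ν θ - ε * ∑ θ, f θ * g θ := by
      rw [Finset.mul_sum, ← Finset.sum_sub_distrib]; congr 1; ext θ; ring
    rw [this, hsumfg]; ring
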